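/- arXiv:1709.07785 — 2 statements merged into one kernel-verified Lean document; each statement's English description precedes it below -/
import Mathlib

section
/- Let c be a permutation of Fin n which is a cycle (Equiv.Perm.IsCycle c), let i be in the support of c, and let ν be a permutation of Fin n fixing every element of the support of c. Then for every family 𝒢 : Set (Set (Fin n)), the number of permutations π with Equiv.Perm.cycleOf π i = c and 𝒢[π] = 𝒢 equals the number of permutations π with Equiv.Perm.cycleOf π i = c and 𝒢[π] = (fun B => ν '' B) '' 𝒢. (Hence, among permutations whose disjoint cycle decomposition involves the fixed cycle c containing i, groupings that agree on the group of i and differ only by relabeling the remaining players are equinumerous.) -/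
/-- The grouping (orbit partition) specified by a permutation. -/
def grouping {n : ℕ} (π : Equiv.Perm (Fin n)) : Set (Set (Fin n)) :=
  Set.range (fun i => {x | Equiv.Perm.SameCycle π i x})

open Equiv Equiv.Perm in
lemma cycleOf_conj' {α : Type*} [Fintype α] [DecidableEq α] (σ π : Equiv.Perm α) (x : α) :
    (σ * π * σ⁻¹).cycleOf (σ x) = σ * π.cycleOf x * σ⁻¹ := by
  ext y
  rw [Equiv.Perm.mul_apply, Equiv.Perm.mul_apply, Equiv.Perm.cycleOf_apply,
    Equiv.Perm.cycleOf_apply]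
  have h : SameCycle (σ * π * σ⁻¹) (σ x) y ↔ SameCycle π x (σ⁻¹ y) := by
    rw [Equiv.Perm.sameCycle_conj, (Equiv.Perm.inv_eq_iff_eq.mpr rfl)]
  split_ifs with h1 h2 h2
  · simp [Equiv.Perm.mul_apply]
  · exact absurd (h.mp h1) h2
  · exact absurd (h.mpr h2) h1
  · simp

open Equiv Equiv.Perm in
lemma grouping_conj {n : ℕ} (σ π : Equiv.Perm (Fin n)) :
    grouping (σ * π * σ⁻¹) = (fun B => ⇑σ '' B) '' grouping π := by
  have key : ∀ a : Fin n, ⇑σ '' {x | SameCycle π a x} = {x | SameCycle (σ * π * σ⁻¹) (σ a) x} := by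
    intro a
    ext y
    simp only [Set.mem_image, Set.mem_setOf_eq]
    rw [Equiv.Perm.sameCycle_conj, (Equiv.Perm.inv_eq_iff_eq.mpr rfl)]
    constructor
    · rintro ⟨z, hz, rfl⟩; rwa [(Equiv.Perm.inv_eq_iff_eq.mpr rfl)]
    · intro h; exact ⟨σ⁻¹ y, h, by simp⟩
  ext S
  simp only [grouping, Set.mem_image, Set.mem_range]
  constructor
  · rintro ⟨j, rfl⟩
    exact ⟨{x | SameCycle π (σ⁻¹ j) x}, ⟨σ⁻¹ j, rfl⟩, by rw [key, (Equiv.Perm.eq_inv_iff_eq.mp rfl)]⟩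
  · rintro ⟨B, ⟨a, rfl⟩, rfl⟩
    exact ⟨σ a, (key a).symm⟩

theorem card_grouping_fixed_cycle_relabel {n : ℕ} (c : Equiv.Perm (Fin n))
    (hc : Equiv.Perm.IsCycle c) (i : Fin n) (hi : i ∈ c.support)
    (ν : Equiv.Perm (Fin n)) (hν : ∀ x ∈ c.support, ν x = x)
    (𝒢 : Set (Set (Fin n))) :
    Nat.card {π : Equiv.Perm (Fin n) // Equiv.Perm.cycleOf π i = c ∧ grouping π = 𝒢} =
      Nat.card {π : Equiv.Perm (Fin n) //
        Equiv.Perm.cycleOf π i = c ∧ grouping π = (fun B => ⇑ν '' B) '' 𝒢} := by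
  have hνi : ν i = i := hν i hi
  have hνinv : ∀ x ∈ c.support, ν⁻¹ x = x := by
    intro x hx
    conv_lhs => rw [← hν x hx]
    simp
  have hconj : ν * c * ν⁻¹ = c := by
    ext x
    by_cases hx : x ∈ c.support
    · have h1 : ν⁻¹ x = x := hνinv x hx
      have h2 : c x ∈ c.support := by rwa [Equiv.Perm.apply_mem_support]
      simp [Equiv.Perm.mul_apply, h1, hν _ h2]
    · have h3 : c x = x := by rwa [← Equiv.Perm.notMem_support]
      have h4 : ν⁻¹ x ∉ c.support := by
        intro h
        have hx2 : ν⁻¹ x = x := by simpa using (hν _ h).symm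
        rw [hx2] at h
        exact hx h
      have h5 : c (ν⁻¹ x) = ν⁻¹ x := by rwa [← Equiv.Perm.notMem_support]
      simp [Equiv.Perm.mul_apply, show c (ν.symm x) = ν.symm x from h5, h3]
  refine Nat.card_congr (Equiv.subtypeEquiv (Equiv.mulLeft ν |>.trans (Equiv.mulRight ν⁻¹)) ?_)
  intro π
  simp only [Equiv.trans_apply, Equiv.coe_mulLeft, Equiv.coe_mulRight]
  constructor
  · rintro ⟨h1, h2⟩
    constructor
    · have := cycleOf_conj' ν π i
      rw [hνi] at this
      exact this.trans (by rw [h1, hconj])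
    · rw [grouping_conj, h2]
  · rintro ⟨h1, h2⟩
    have hco := cycleOf_conj' ν π i
    rw [hνi] at hco
    have h1 : ν * π.cycleOf i * ν⁻¹ = c := hco.symm.trans h1
    rw [← hconj] at h1
    have h1' : Equiv.Perm.cycleOf π i = c := by
      have h6 := congrArg (fun g => ν⁻¹ * g * ν) h1
      simpa [mul_assoc] using h6
    refine ⟨h1', ?_⟩
    rw [grouping_conj] at h2
    have hinj : Function.Injective (fun B : Set (Fin n) => ⇑ν '' B) := fun A B h => by
      have h7 := congrArg (fun S => ⇑ν⁻¹ '' S) h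
      simpa [Set.image_image] using h7
    exact Set.image_injective.mpr hinj h2
end

section
/- Let G be a finite nonempty group and let p : PMF (G × G) be an arbitrary joint distribution of a pair (v, w) of elements of G. Let q : PMF (G × G × G) be the joint distribution of (r * v, v, w) where r is uniform on G and independent of (v, w); formally q := p.bind (fun vw => PMF.map (fun r => (r * vw.1, vw.1, vw.2)) (PMF.uniformOfFintype G)). Then for all u, v, w ∈ G, q (u, v, w) = (Fintype.card G : ℝ≥0∞)⁻¹ * p (v, w). (Hence in the permutation division protocol, the only opened data rv is uniformly distributed and independent of the inputs v and w.) -/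
open scoped ENNReal

theorem permutation_division_security {G : Type*} [Group G] [Fintype G] [Nonempty G]
    (p : PMF (G × G))
    (q : PMF (G × G × G))
    (hq : q = p.bind (fun vw =>
      PMF.map (fun r => (r * vw.1, vw.1, vw.2)) (PMF.uniformOfFintype G)))
    (u v w : G) :
    q (u, v, w) = (Fintype.card G : ℝ≥0∞)⁻¹ * p (v, w) := by
  classical
  subst hq
  rw [PMF.bind_apply]
  have key : ∀ vw : G × G,
      p vw * (PMF.map (fun r => (r * vw.1, vw.1, vw.2)) (PMF.uniformOfFintype G)) (u, v, w)
        = if vw = (v, w) then (Fintype.card G : ℝ≥0∞)⁻¹ * p (v, w) else 0 := by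
    rintro ⟨a, b⟩
    rw [PMF.map_apply]
    dsimp only
    by_cases h : (a, b) = (v, w)
    · injection h with h1 h2
      subst h1; subst h2
      rw [if_pos rfl, mul_comm]
      congr 1
      rw [tsum_eq_single (u * a⁻¹)]
      · simp [PMF.uniformOfFintype_apply, inv_mul_cancel_right]
      · intro r hr
        rw [if_neg]
        intro heq
        simp only [Prod.mk.injEq] at heq
        exact hr (by rw [heq.1]; group)
    · rw [if_neg h]
      apply mul_eq_zero.mpr
      right
      apply ENNReal.tsum_eq_zero.2
      intro r
      rw [if_neg]
      intro heq
      simp only [Prod.mk.injEq] at heq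
      exact h (Prod.ext heq.2.1.symm heq.2.2.symm)
  calc (∑' vw : G × G, p vw *
        (PMF.map (fun r => (r * vw.1, vw.1, vw.2)) (PMF.uniformOfFintype G)) (u, v, w))
      = ∑' vw : G × G, if vw = (v, w) then (Fintype.card G : ℝ≥0∞)⁻¹ * p (v, w) else 0 :=
        tsum_congr key
    _ = (Fintype.card G : ℝ≥0∞)⁻¹ * p (v, w) := by
        rw [tsum_eq_single (v, w)]
        · rw [if_pos rfl]
        · intro b hb; rw [if_neg hb]
end
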